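/- Let N ≥ 3, set 2* = 2N/(N−2), let b : Ω → ℝ be essentially bounded and measurable with b ≥ 0 a.e., let a > 0 be real, and let v : Ω → ℝ be measurable with v(x) > 0 for a.e. x ∈ Ω, such that x ↦ |v(x)|^{2*} is integrable and x ↦ h(x)·v(x)^(1−γ) is integrable on Ω. Define φ : (0, ∞) → ℝ by φ(t) = (a/2)·t² + (1/(γ−1))·∫_Ω h(x)·g(t·v(x))^(1−γ) dx + (1/(2·2*))·∫_Ω b(x)·g(t·v(x))^(2·2*) dx. Then φ(t) → +∞ as t → 0⁺, φ(t) → +∞ as t → +∞, and there exists t₀ > 0 with φ(t₀) = inf{ φ(t) : t > 0 }. -/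

import Mathlib

open MeasureTheory Filter

section gfacts
variable {g : ℝ → ℝ}

lemma g_deriv_pos (g : ℝ → ℝ) (t : ℝ) : (0:ℝ) < (1 + 2 * g t ^ 2) ^ (-(1 / 2) : ℝ) :=
  Real.rpow_pos_of_pos (by positivity) _

lemma g_deriv_le_one (g : ℝ → ℝ) (t : ℝ) : (1 + 2 * g t ^ 2) ^ (-(1 / 2) : ℝ) ≤ 1 :=
  Real.rpow_le_one_of_one_le_of_nonpos (by nlinarith [sq_nonneg (g t)]) (by norm_num)

variable (hg0 : g 0 = 0)
  (hg : ∀ t : ℝ, HasDerivAt g ((1 + 2 * g t ^ 2) ^ (-(1 / 2) : ℝ)) t)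

include hg

lemma g_sm : StrictMono g := by
  apply strictMono_of_deriv_pos
  intro t
  rw [(hg t).deriv]
  exact g_deriv_pos g t

lemma g_cont : Continuous g :=
  continuous_iff_continuousAt.2 fun t => (hg t).continuousAt

include hg0

lemma g_le_self : ∀ u : ℝ, 0 ≤ u → g u ≤ u := by
  intro u hu
  have hmono : Monotone (fun u => u - g u) := by
    apply monotone_of_deriv_nonneg
    · exact differentiable_id.sub fun t => (hg t).differentiableAt
    · intro x
      have hd : HasDerivAt (fun u => u - g u)
          (1 - (1 + 2 * g x ^ 2) ^ (-(1 / 2) : ℝ)) x := (hasDerivAt_id x).sub (hg x)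
      rw [hd.deriv]
      have := g_deriv_le_one g x
      linarith
  have := hmono hu
  simp only [hg0, sub_zero] at this
  linarith

lemma g_sq_le : ∀ u : ℝ, 0 ≤ u → g u ^ 2 ≤ Real.sqrt 2 * u := by
  intro u hu
  have hmono : Monotone (fun u => Real.sqrt 2 * u - g u ^ 2) := by
    apply monotone_of_deriv_nonneg
    · exact (differentiable_const _ |>.mul differentiable_id).sub
        (fun t => ((hg t).pow 2).differentiableAt)
    · intro x
      have hd : HasDerivAt (fun u => Real.sqrt 2 * u - g u ^ 2)
          (Real.sqrt 2 * 1 - (2:ℕ) * g x ^ (2-1) * ((1 + 2 * g x ^ 2) ^ (-(1 / 2) : ℝ))) x :=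
        ((hasDerivAt_id x).const_mul _).sub ((hg x).pow 2)
      rw [hd.deriv]
      have hb : (0:ℝ) < 1 + 2 * g x ^ 2 := by positivity
      have hkey : 2 * g x * ((1 + 2 * g x ^ 2) ^ (-(1 / 2) : ℝ)) ≤ Real.sqrt 2 := by
        rw [Real.rpow_neg hb.le, mul_comm (2 * g x), ← div_eq_inv_mul,
          div_le_iff₀ (Real.rpow_pos_of_pos hb _), ← Real.sqrt_eq_rpow,
          ← Real.sqrt_mul (by norm_num : (0:ℝ) ≤ 2)]
        rcases le_or_gt (g x) 0 with hgx | hgx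
        · exact le_trans (by nlinarith) (Real.sqrt_nonneg _)
        · have h1 : 2 * g x = Real.sqrt ((2 * g x) ^ 2) := (Real.sqrt_sq (by positivity)).symm
          rw [h1]
          apply Real.sqrt_le_sqrt
          nlinarith
      simp only [pow_one, Nat.cast_ofNat, mul_one]
      nlinarith [hkey]
  have := hmono hu
  simp only [hg0, mul_zero, zero_pow, sub_zero] at this
  nlinarith [this]

lemma g_lb : ∃ c : ℝ, 0 < c ∧ ∀ u : ℝ, 0 ≤ u → c * min u 1 ≤ g u := by
  refine ⟨(1 + 2 * g 1 ^ 2) ^ (-(1 / 2) : ℝ), g_deriv_pos g 1, ?_⟩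
  set c := (1 + 2 * g 1 ^ 2) ^ (-(1 / 2) : ℝ) with hc
  have hsm := g_sm hg
  have key : ∀ u ∈ Set.Icc (0:ℝ) 1, c * u ≤ g u := by
    intro u hu
    have hmono : MonotoneOn (fun u => g u - c * u) (Set.Icc (0:ℝ) 1) := by
      apply monotoneOn_of_deriv_nonneg (convex_Icc _ _)
      · exact ((g_cont hg).sub (continuous_const.mul continuous_id)).continuousOn
      · exact fun x _ => ((hg x).sub ((hasDerivAt_id x).const_mul c)).differentiableAt.differentiableWithinAt
      · intro x hx
        rw [interior_Icc] at hx
        have hd : HasDerivAt (fun u => g u - c * u)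
            ((1 + 2 * g x ^ 2) ^ (-(1 / 2) : ℝ) - c * 1) x :=
          (hg x).sub ((hasDerivAt_id x).const_mul c)
        rw [hd.deriv, mul_one, sub_nonneg, hc]
        apply Real.rpow_le_rpow_of_nonpos (by positivity) _ (by norm_num)
        have h1 : g x ≤ g 1 := hsm.monotone hx.2.le
        have h0 : 0 ≤ g x := by rw [← hg0]; exact hsm.monotone hx.1.le
        nlinarith
    have := hmono ⟨le_refl 0, zero_le_one⟩ hu hu.1
    simp only [hg0, mul_zero, sub_zero] at this
    linarith
  intro u hu
  rcases le_or_gt u 1 with h1 | h1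
  · rw [min_eq_left h1]; exact key u ⟨hu, h1⟩
  · rw [min_eq_right h1.le]
    calc c * 1 ≤ g 1 := key 1 ⟨zero_le_one, le_refl 1⟩
      _ ≤ g u := hsm.monotone h1.le

end gfacts

theorem stmt_16 (N : ℕ) (hN : 3 ≤ N)
    (Ω : Set (EuclideanSpace ℝ (Fin N))) (hΩo : IsOpen Ω)
    (hΩb : Bornology.IsBounded Ω) (hΩpos : 0 < volume Ω)
    (γ : ℝ) (hγ : 1 < γ)
    (g : ℝ → ℝ) (hg0 : g 0 = 0)
    (hg : ∀ t : ℝ, HasDerivAt g ((1 + 2 * g t ^ 2) ^ (-(1 / 2) : ℝ)) t)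
    (h : EuclideanSpace ℝ (Fin N) → ℝ)
    (hh_int : IntegrableOn h Ω)
    (hh_pos : ∀ᵐ x ∂(volume.restrict Ω), 0 < h x)
    (s : ℝ) (hs : s = 2 * (N : ℝ) / ((N : ℝ) - 2))
    (b : EuclideanSpace ℝ (Fin N) → ℝ)
    (hb : MemLp b ⊤ (volume.restrict Ω))
    (hb_nonneg : ∀ᵐ x ∂(volume.restrict Ω), 0 ≤ b x)
    (a : ℝ) (ha : 0 < a)
    (v : EuclideanSpace ℝ (Fin N) → ℝ)
    (hv_meas : AEMeasurable v (volume.restrict Ω))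
    (hv_pos : ∀ᵐ x ∂(volume.restrict Ω), 0 < v x)
    (hv_ints : IntegrableOn (fun x => |v x| ^ s) Ω)
    (hv_inth : IntegrableOn (fun x => h x * v x ^ (1 - γ)) Ω)
    (φ : ℝ → ℝ)
    (hφ : ∀ t : ℝ, φ t =
      a / 2 * t ^ 2 + (1 / (γ - 1)) * ∫ x in Ω, h x * g (t * v x) ^ (1 - γ)
        + (1 / (2 * s)) * ∫ x in Ω, b x * g (t * v x) ^ (2 * s)) :
    Tendsto φ (nhdsWithin 0 (Set.Ioi 0)) atTop ∧
    Tendsto φ atTop atTop ∧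
    ∃ t₀ : ℝ, 0 < t₀ ∧ φ t₀ = sInf (φ '' Set.Ioi 0) := by
  obtain ⟨c, hc, hclb⟩ := g_lb hg0 hg
  have hsm := g_sm hg
  have gcont := g_cont hg
  have hgpos : ∀ u : ℝ, 0 < u → 0 < g u := fun u hu => hg0 ▸ hsm hu
  have hgle := g_le_self hg0 hg
  have hgsq := g_sq_le hg0 hg
  have hNpos : (0:ℝ) < (N:ℝ) - 2 := by
    have : (3:ℝ) ≤ N := by exact_mod_cast hN
    linarith
  have hs_pos : 0 < s := by
    rw [hs]; positivity
  have hγ' : (0:ℝ) < γ - 1 := by linarith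
  have hγ'' : (1 - γ : ℝ) ≤ 0 := by linarith
  -- measurability of the A-integrand
  have haemA : ∀ t : ℝ, AEStronglyMeasurable (fun x => h x * g (t * v x) ^ (1 - γ))
      (volume.restrict Ω) := by
    intro t
    apply (hh_int.aestronglyMeasurable.aemeasurable.mul
      (((gcont.measurable.comp_aemeasurable (hv_meas.const_mul t)).pow aemeasurable_const))).aestronglyMeasurable
  have haemB : ∀ t : ℝ, AEStronglyMeasurable (fun x => b x * g (t * v x) ^ (2 * s))
      (volume.restrict Ω) := by
    intro t
    apply (hb.aestronglyMeasurable.aemeasurable.mul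
      (((gcont.measurable.comp_aemeasurable (hv_meas.const_mul t)).pow aemeasurable_const))).aestronglyMeasurable
  -- key pointwise bound for the A integrand
  have hminmul : ∀ t w : ℝ, 0 ≤ t → 0 ≤ w → min t 1 * min w 1 ≤ min (t * w) 1 := by
    intro t w ht hw
    refine le_min ?_ ?_
    · exact mul_le_mul (min_le_left _ _) (min_le_left _ _) (le_min hw zero_le_one) ht
    · exact mul_le_one₀ (min_le_right _ _) (le_min hw zero_le_one) (min_le_right _ _)
  have hptA : ∀ t : ℝ, 0 < t → ∀ x, 0 < v x →
      g (t * v x) ^ (1 - γ) ≤ (c * min t 1) ^ (1 - γ) * (v x ^ (1 - γ) + 1) := by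
    intro t ht x hvx
    have hu : 0 < t * v x := mul_pos ht hvx
    have hmt : 0 < min t 1 := lt_min ht one_pos
    have hmv : 0 < min (v x) 1 := lt_min hvx one_pos
    have hlb : 0 < c * min t 1 * min (v x) 1 := by positivity
    have hmin : c * min t 1 * min (v x) 1 ≤ g (t * v x) := by
      calc c * min t 1 * min (v x) 1 = c * (min t 1 * min (v x) 1) := by ring
        _ ≤ c * min (t * v x) 1 :=
            mul_le_mul_of_nonneg_left (hminmul t (v x) ht.le hvx.le) hc.le
        _ ≤ g (t * v x) := hclb _ hu.le
    have h1 : g (t * v x) ^ (1 - γ) ≤ (c * min t 1 * min (v x) 1) ^ (1 - γ) :=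
      Real.rpow_le_rpow_of_nonpos hlb hmin hγ''
    have h2 : (c * min t 1 * min (v x) 1) ^ (1 - γ)
        = (c * min t 1) ^ (1 - γ) * (min (v x) 1) ^ (1 - γ) :=
      Real.mul_rpow (by positivity) hmv.le
    have h3 : (min (v x) 1) ^ (1 - γ) ≤ v x ^ (1 - γ) + 1 := by
      rcases le_or_gt (v x) 1 with hv1 | hv1
      · rw [min_eq_left hv1]
        have : (0:ℝ) < 1 := one_pos
        nlinarith [Real.rpow_natCast (v x) 0]  -- just need vx^(1-γ) ≤ vx^(1-γ)+1
      · rw [min_eq_right hv1.le, Real.one_rpow]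
        have : 0 < v x ^ (1 - γ) := Real.rpow_pos_of_pos hvx _
        linarith
    calc g (t * v x) ^ (1 - γ) ≤ (c * min t 1) ^ (1 - γ) * (min (v x) 1) ^ (1 - γ) := by
          rw [← h2]; exact h1
      _ ≤ (c * min t 1) ^ (1 - γ) * (v x ^ (1 - γ) + 1) :=
          mul_le_mul_of_nonneg_left h3 (Real.rpow_pos_of_pos (by positivity) _).le
  -- integrability of the A integrand
  have hA_int : ∀ t : ℝ, 0 < t →
      Integrable (fun x => h x * g (t * v x) ^ (1 - γ)) (volume.restrict Ω) := by
    intro t ht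
    have hdom : Integrable
        (fun x => (c * min t 1) ^ (1 - γ) * (h x * v x ^ (1 - γ) + h x))
        (volume.restrict Ω) := ((hv_inth.add hh_int).const_mul _)
    refine hdom.mono (haemA t) ?_
    filter_upwards [hh_pos, hv_pos] with x hhx hvx
    have hgp : 0 < g (t * v x) := hgpos _ (mul_pos ht hvx)
    have hrp : 0 < g (t * v x) ^ (1 - γ) := Real.rpow_pos_of_pos hgp _
    have hb1 : h x * g (t * v x) ^ (1 - γ)
        ≤ (c * min t 1) ^ (1 - γ) * (h x * v x ^ (1 - γ) + h x) := by
      have := hptA t ht x hvx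
      have h2 : h x * g (t * v x) ^ (1 - γ)
          ≤ h x * ((c * min t 1) ^ (1 - γ) * (v x ^ (1 - γ) + 1)) :=
        mul_le_mul_of_nonneg_left this hhx.le
      calc h x * g (t * v x) ^ (1 - γ)
          ≤ h x * ((c * min t 1) ^ (1 - γ) * (v x ^ (1 - γ) + 1)) := h2
        _ = (c * min t 1) ^ (1 - γ) * (h x * v x ^ (1 - γ) + h x) := by ring
    rw [Real.norm_eq_abs, abs_of_pos (mul_pos hhx hrp)]
    exact le_trans hb1 (le_abs_self _)
  -- nonnegativity of integrals
  have hA_nonneg : ∀ t : ℝ, 0 < t → 0 ≤ ∫ x in Ω, h x * g (t * v x) ^ (1 - γ) := by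
    intro t ht
    apply integral_nonneg_of_ae
    filter_upwards [hh_pos, hv_pos] with x hhx hvx
    exact (mul_pos hhx (Real.rpow_pos_of_pos (hgpos _ (mul_pos ht hvx)) _)).le
  have hB_nonneg : ∀ t : ℝ, 0 < t → 0 ≤ ∫ x in Ω, b x * g (t * v x) ^ (2 * s) := by
    intro t ht
    apply integral_nonneg_of_ae
    filter_upwards [hb_nonneg, hv_pos] with x hbx hvx
    exact mul_nonneg hbx (Real.rpow_pos_of_pos (hgpos _ (mul_pos ht hvx)) _).le
  -- positivity of c₀
  set c₀ : ℝ := ∫ x in Ω, h x * v x ^ (1 - γ) with hc₀def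
  have hsupp : ∀ᵐ x ∂(volume.restrict Ω),
      x ∈ Function.support (fun x => h x * v x ^ (1 - γ)) := by
    filter_upwards [hh_pos, hv_pos] with x hhx hvx
    exact (mul_pos hhx (Real.rpow_pos_of_pos hvx _)).ne'
  have hc₀_pos : 0 < c₀ := by
    rw [hc₀def, integral_pos_iff_support_of_nonneg_ae ?pos hv_inth]
    case pos =>
      filter_upwards [hh_pos, hv_pos] with x hhx hvx
      exact (mul_pos hhx (Real.rpow_pos_of_pos hvx _)).le
    set f := fun x => h x * v x ^ (1 - γ)
    by_contra h0
    push_neg at h0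
    have hsupp0 : volume.restrict Ω (Function.support f) = 0 := le_antisymm h0 (zero_le)
    have hcomp0 : volume.restrict Ω (Function.support f)ᶜ = 0 := by
      have : (Function.support f)ᶜ = {x | ¬ x ∈ Function.support f} := by
        ext x; simp
      rw [this]
      exact ae_iff.mp hsupp
    have huniv : volume.restrict Ω Set.univ ≤ 0 := by
      calc volume.restrict Ω Set.univ
          = volume.restrict Ω (Function.support f ∪ (Function.support f)ᶜ) := by
            rw [Set.union_compl_self]
        _ ≤ volume.restrict Ω (Function.support f)
            + volume.restrict Ω (Function.support f)ᶜ := measure_union_le _ _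
        _ = 0 := by rw [hsupp0, hcomp0, add_zero]
    rw [Measure.restrict_apply_univ] at huniv
    exact absurd (le_antisymm huniv (zero_le)) hΩpos.ne'
  -- lower bound for the A integral
  have hA_lb : ∀ t : ℝ, 0 < t →
      t ^ (1 - γ) * c₀ ≤ ∫ x in Ω, h x * g (t * v x) ^ (1 - γ) := by
    intro t ht
    have haeeq : (fun x => t ^ (1 - γ) * (h x * v x ^ (1 - γ)))
        =ᵐ[volume.restrict Ω] (fun x => h x * (t * v x) ^ (1 - γ)) := by
      filter_upwards [hv_pos] with x hvx
      rw [Real.mul_rpow ht.le hvx.le]; ring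
    have hint1 : Integrable (fun x => h x * (t * v x) ^ (1 - γ)) (volume.restrict Ω) :=
      (hv_inth.const_mul (t ^ (1 - γ))).congr haeeq
    have heq : ∫ x in Ω, h x * (t * v x) ^ (1 - γ) = t ^ (1 - γ) * c₀ := by
      rw [← integral_congr_ae haeeq, integral_const_mul, hc₀def]
    rw [← heq]
    apply integral_mono_ae hint1 (hA_int t ht)
    filter_upwards [hh_pos, hv_pos] with x hhx hvx
    have hu : 0 < t * v x := mul_pos ht hvx
    have : (t * v x) ^ (1 - γ) ≤ g (t * v x) ^ (1 - γ) :=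
      Real.rpow_le_rpow_of_nonpos (hgpos _ hu) (hgle _ hu.le) hγ''
    exact mul_le_mul_of_nonneg_left this hhx.le
  -- splitting φ
  have hΩfin : volume Ω ≠ ⊤ := hΩb.measure_lt_top.ne
  have hm_pos : 0 < (volume Ω).toReal := ENNReal.toReal_pos hΩpos.ne' hΩfin
  have hsplit : ∀ t : ℝ, 0 < t → φ t = a / 2 * t ^ 2
      + 1 / (γ - 1) * ((∫ x in Ω, h x * g (t * v x) ^ (1 - γ))
        + (1 / (2 * s) * ∫ x in Ω, b x * g (t * v x) ^ (2 * s)) * (volume Ω).toReal) := by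
    intro t ht
    rw [hφ t, integral_add (hA_int t ht)
      ((integrableOn_const_iff (C := (1 / (2 * s) * ∫ x in Ω, b x * g (t * v x) ^ (2 * s)))).2
        (Or.inr hΩb.measure_lt_top)),
      setIntegral_const, smul_eq_mul, mul_comm (volume.real Ω), measureReal_def]
  -- lower bounds for φ
  have hφ_lb1 : ∀ t : ℝ, 0 < t → 1 / (γ - 1) * (t ^ (1 - γ) * c₀) ≤ φ t := by
    intro t ht
    rw [hsplit t ht]
    have h1 := hA_lb t ht
    have h2 := hB_nonneg t ht
    have h3 : 0 ≤ a / 2 * t ^ 2 := by positivity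
    have h5 : 0 ≤ (1 / (2 * s) * ∫ x in Ω, b x * g (t * v x) ^ (2 * s)) * (volume Ω).toReal :=
      mul_nonneg (mul_nonneg (by positivity) h2) hm_pos.le
    have h4 : 1 / (γ - 1) * (t ^ (1 - γ) * c₀)
        ≤ 1 / (γ - 1) * ((∫ x in Ω, h x * g (t * v x) ^ (1 - γ))
          + (1 / (2 * s) * ∫ x in Ω, b x * g (t * v x) ^ (2 * s)) * (volume Ω).toReal) :=
      mul_le_mul_of_nonneg_left (by linarith) (by positivity)
    linarith
  have hφ_lb2 : ∀ t : ℝ, 0 < t → a / 2 * t ^ 2 ≤ φ t := by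
    intro t ht
    rw [hsplit t ht]
    have h1 := hA_nonneg t ht
    have h2 := hB_nonneg t ht
    have h5 : 0 ≤ (1 / (2 * s) * ∫ x in Ω, b x * g (t * v x) ^ (2 * s)) * (volume Ω).toReal :=
      mul_nonneg (mul_nonneg (by positivity) h2) hm_pos.le
    have h4 : 0 ≤ 1 / (γ - 1) * ((∫ x in Ω, h x * g (t * v x) ^ (1 - γ))
          + (1 / (2 * s) * ∫ x in Ω, b x * g (t * v x) ^ (2 * s)) * (volume Ω).toReal) :=
      mul_nonneg (by positivity) (by linarith)
    linarith
  -- part 1 : blow-up at 0⁺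
  have part1 : Tendsto φ (nhdsWithin 0 (Set.Ioi 0)) atTop := by
    have h1 : Tendsto (fun t : ℝ => t ^ (1 - γ)) (nhdsWithin 0 (Set.Ioi 0)) atTop := by
      have h2 : Tendsto (fun t : ℝ => (t⁻¹) ^ (γ - 1)) (nhdsWithin 0 (Set.Ioi 0)) atTop :=
        (tendsto_rpow_atTop hγ').comp tendsto_inv_nhdsGT_zero
      apply h2.congr'
      filter_upwards [self_mem_nhdsWithin] with t ht
      have ht' : (0:ℝ) < t := ht
      rw [Real.inv_rpow ht'.le, ← Real.rpow_neg ht'.le, neg_sub]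
    have h3 : Tendsto (fun t : ℝ => 1 / (γ - 1) * (t ^ (1 - γ) * c₀))
        (nhdsWithin 0 (Set.Ioi 0)) atTop := by
      have h4 := h1.const_mul_atTop (show (0:ℝ) < c₀ / (γ - 1) by positivity)
      apply h4.congr
      intro t; field_simp
    apply tendsto_atTop_mono' _ _ h3
    filter_upwards [self_mem_nhdsWithin] with t ht
    exact hφ_lb1 t ht
  -- part 2 : blow-up at +∞
  have part2 : Tendsto φ atTop atTop := by
    have h1 : Tendsto (fun t : ℝ => a / 2 * t ^ 2) atTop atTop :=
      (tendsto_pow_atTop two_ne_zero).const_mul_atTop (by positivity)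
    apply tendsto_atTop_mono' _ _ h1
    filter_upwards [eventually_gt_atTop 0] with t ht
    exact hφ_lb2 t ht
  -- essential bound for b
  obtain ⟨C, hC0, hbC⟩ : ∃ C : ℝ, 0 ≤ C ∧ ∀ᵐ x ∂(volume.restrict Ω), |b x| ≤ C := by
    refine ⟨(eLpNormEssSup b (volume.restrict Ω)).toReal, ENNReal.toReal_nonneg, ?_⟩
    have hfin : eLpNormEssSup b (volume.restrict Ω) ≠ ⊤ := by
      have h2 := hb.2
      rw [eLpNorm_exponent_top] at h2
      exact h2.ne
    filter_upwards [ae_le_eLpNormEssSup (f := b) (μ := volume.restrict Ω)] with x hx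
    have h3 := ENNReal.toReal_mono hfin hx
    simpa [Real.norm_eq_abs] using h3
  -- pointwise bound for the B integrand
  have hptB : ∀ T : ℝ, 0 < T → ∀ t : ℝ, 0 < t → t ≤ T → ∀ᵐ x ∂(volume.restrict Ω),
      ‖b x * g (t * v x) ^ (2 * s)‖ ≤ C * ((Real.sqrt 2 * T) ^ s * |v x| ^ s) := by
    intro T hT t ht htT
    filter_upwards [hv_pos, hbC] with x hvx hbx
    have hu : 0 < t * v x := mul_pos ht hvx
    have hgp : 0 < g (t * v x) := hgpos _ hu
    have h2 : g (t * v x) ^ (2 * s) = (g (t * v x) ^ 2) ^ s := by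
      rw [Real.rpow_mul hgp.le, Real.rpow_two]
    have h3 : (g (t * v x) ^ 2) ^ s ≤ (Real.sqrt 2 * T * v x) ^ s := by
      apply Real.rpow_le_rpow (by positivity) _ hs_pos.le
      calc g (t * v x) ^ 2 ≤ Real.sqrt 2 * (t * v x) := hgsq _ hu.le
        _ ≤ Real.sqrt 2 * T * v x := by
              nlinarith [mul_nonneg (Real.sqrt_nonneg 2) (mul_nonneg (sub_nonneg.2 htT) hvx.le)]
    have h4 : (Real.sqrt 2 * T * v x) ^ s = (Real.sqrt 2 * T) ^ s * v x ^ s :=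
      Real.mul_rpow (by positivity) hvx.le
    have hrp : 0 < g (t * v x) ^ (2 * s) := Real.rpow_pos_of_pos hgp _
    rw [norm_mul, Real.norm_eq_abs, Real.norm_eq_abs, abs_of_pos hrp, abs_of_pos hvx]
    calc |b x| * g (t * v x) ^ (2 * s) ≤ C * g (t * v x) ^ (2 * s) :=
          mul_le_mul_of_nonneg_right hbx hrp.le
      _ ≤ C * ((Real.sqrt 2 * T) ^ s * v x ^ s) := by
          apply mul_le_mul_of_nonneg_left _ hC0
          rw [h2, ← h4]; exact h3
  -- continuity of the A part
  have hAcont : ∀ t₀ : ℝ, 0 < t₀ →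
      ContinuousAt (fun t => ∫ x in Ω, h x * g (t * v x) ^ (1 - γ)) t₀ := by
    intro t₀ ht₀
    apply continuousAt_of_dominated
      (bound := fun x => (c * min (t₀ / 2) 1) ^ (1 - γ) * (h x * v x ^ (1 - γ) + h x))
    · exact Eventually.of_forall haemA
    · filter_upwards [eventually_gt_nhds (half_lt_self ht₀)] with t htt
      filter_upwards [hh_pos, hv_pos] with x hhx hvx
      have ht : 0 < t := lt_trans (half_pos ht₀) htt
      have hK : (c * min t 1) ^ (1 - γ) ≤ (c * min (t₀ / 2) 1) ^ (1 - γ) := by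
        apply Real.rpow_le_rpow_of_nonpos (by positivity) _ hγ''
        apply mul_le_mul_of_nonneg_left _ hc.le
        exact min_le_min htt.le le_rfl
      have hb1 := hptA t ht x hvx
      have hb2 : g (t * v x) ^ (1 - γ)
          ≤ (c * min (t₀ / 2) 1) ^ (1 - γ) * (v x ^ (1 - γ) + 1) := by
        refine le_trans hb1 (mul_le_mul_of_nonneg_right hK ?_)
        have := Real.rpow_pos_of_pos hvx (1 - γ)
        linarith
      have hgp : 0 < g (t * v x) := hgpos _ (mul_pos ht hvx)
      have hrp : 0 < g (t * v x) ^ (1 - γ) := Real.rpow_pos_of_pos hgp _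
      rw [Real.norm_eq_abs, abs_of_pos (mul_pos hhx hrp)]
      calc h x * g (t * v x) ^ (1 - γ)
          ≤ h x * ((c * min (t₀ / 2) 1) ^ (1 - γ) * (v x ^ (1 - γ) + 1)) :=
            mul_le_mul_of_nonneg_left hb2 hhx.le
        _ = (c * min (t₀ / 2) 1) ^ (1 - γ) * (h x * v x ^ (1 - γ) + h x) := by ring
    · exact (hv_inth.add hh_int).const_mul _
    · filter_upwards [hv_pos] with x hvx
      have hcm : ContinuousAt (fun t : ℝ => g (t * v x)) t₀ :=
        (gcont.comp (continuous_id.mul continuous_const)).continuousAt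
      exact continuousAt_const.mul
        (hcm.rpow_const (Or.inl (hgpos _ (mul_pos ht₀ hvx)).ne'))
  -- continuity of the B part
  have hBcont : ∀ t₀ : ℝ, 0 < t₀ →
      ContinuousAt (fun t => ∫ x in Ω, b x * g (t * v x) ^ (2 * s)) t₀ := by
    intro t₀ ht₀
    apply continuousAt_of_dominated
      (bound := fun x => C * ((Real.sqrt 2 * (t₀ + 1)) ^ s * |v x| ^ s))
    · exact Eventually.of_forall haemB
    · filter_upwards [eventually_gt_nhds (half_lt_self ht₀),
        eventually_lt_nhds (lt_add_one t₀)] with t ht1 ht2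
      exact hptB (t₀ + 1) (by linarith) t (lt_trans (half_pos ht₀) ht1) ht2.le
    · have hint : Integrable (fun x => (C * (Real.sqrt 2 * (t₀ + 1)) ^ s) * |v x| ^ s)
          (volume.restrict Ω) := hv_ints.const_mul _
      apply hint.congr
      filter_upwards with x
      ring
    · filter_upwards [hv_pos] with x hvx
      have hcm : ContinuousAt (fun t : ℝ => g (t * v x)) t₀ :=
        (gcont.comp (continuous_id.mul continuous_const)).continuousAt
      exact continuousAt_const.mul
        (hcm.rpow_const (Or.inl (hgpos _ (mul_pos ht₀ hvx)).ne'))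
  -- continuity of φ on (0,∞)
  have hφcont : ∀ t₀ : ℝ, 0 < t₀ → ContinuousAt φ t₀ := by
    intro t₀ ht₀
    have hψ : ContinuousAt (fun t => a / 2 * t ^ 2
        + 1 / (γ - 1) * ((∫ x in Ω, h x * g (t * v x) ^ (1 - γ))
          + (1 / (2 * s) * ∫ x in Ω, b x * g (t * v x) ^ (2 * s)) * (volume Ω).toReal)) t₀ := by
      apply ContinuousAt.add
      · exact (continuousAt_const.mul ((continuous_pow 2).continuousAt))
      · exact continuousAt_const.mul ((hAcont t₀ ht₀).add
          (((continuousAt_const.mul (hBcont t₀ ht₀))).mul continuousAt_const))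
    apply hψ.congr
    filter_upwards [eventually_gt_nhds ht₀] with t ht
    exact (hsplit t ht).symm
  -- extraction of the minimizer
  refine ⟨part1, part2, ?_⟩
  have hev0 : ∀ᶠ t in nhdsWithin 0 (Set.Ioi 0), φ 1 ≤ φ t :=
    part1.eventually (eventually_ge_atTop (φ 1))
  obtain ⟨u, hu, husub⟩ := mem_nhdsGT_iff_exists_Ioo_subset.1 hev0
  obtain ⟨T, hT⟩ := eventually_atTop.1 (part2.eventually (eventually_ge_atTop (φ 1)))
  set ε₀ : ℝ := min u 1 / 2 with hε₀def
  have hε₀pos : 0 < ε₀ := by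
    have : (0:ℝ) < u := hu
    rw [hε₀def]; positivity
  have hε₀le1 : ε₀ ≤ 1 := by
    rw [hε₀def]
    have : min u 1 ≤ 1 := min_le_right _ _
    linarith
  set T₀ : ℝ := max T 1 with hT₀def
  have h1K : (1:ℝ) ∈ Set.Icc ε₀ T₀ := ⟨hε₀le1, le_max_right _ _⟩
  have hKcont : ContinuousOn φ (Set.Icc ε₀ T₀) := fun t ht =>
    (hφcont t (lt_of_lt_of_le hε₀pos ht.1)).continuousWithinAt
  obtain ⟨t₀, ht₀K, hmin⟩ := isCompact_Icc.exists_isMinOn ⟨1, h1K⟩ hKcont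
  refine ⟨t₀, lt_of_lt_of_le hε₀pos ht₀K.1, ?_⟩
  have hmin' : ∀ x ∈ Set.Icc ε₀ T₀, φ t₀ ≤ φ x := fun x hx => hmin hx
  symm
  apply IsLeast.csInf_eq
  constructor
  · exact ⟨t₀, lt_of_lt_of_le hε₀pos ht₀K.1, rfl⟩
  · rintro y ⟨t, ht, rfl⟩
    have ht' : (0:ℝ) < t := ht
    rcases lt_or_ge t ε₀ with hcase | hcase
    · have htu : t ∈ Set.Ioo 0 u := by
        constructor
        · exact ht'
        · have : ε₀ ≤ u := by
            rw [hε₀def]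
            have h5 : min u 1 ≤ u := min_le_left _ _
            have : (0:ℝ) < u := hu
            linarith
          linarith
      exact le_trans (hmin' 1 h1K) (husub htu)
    · rcases le_or_gt t T₀ with hcase2 | hcase2
      · exact hmin' t ⟨hcase, hcase2⟩
      · have : T ≤ t := le_trans (le_max_left _ _) hcase2.le
        exact le_trans (hmin' 1 h1K) (hT t this)
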